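/- Let T_Q = (Q_{i-j})_{i,j≥0} be a positive semidefinite banded Toeplitz operator on ℓ²_H(ℕ₀) with Q_j = 0 for |j| ≥ m+1. Then the Schur complement S(m) of T_Q on {0,…,m} satisfies S(m) = [[Q_0, B*],[B, S(m-1)]] with B = col(Q_1,…,Q_m); that is, the first row of S(m) consists exactly of the Toeplitz coefficients Q_0, Q_1*, …, Q_m*. -/

import Mathlib

open scoped InnerProductSpace
open ContinuousLinearMap

section

variable {H : Type*} [NormedAddCommGroup H] [InnerProductSpace ℂ H] [CompleteSpace H]

/-- The quadratic form of the block Toeplitz matrix `(Q_{i-j})_{i,j≥0}` on vectors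
supported in `{0,…,N-1}`. -/
noncomputable def toepQF (Q : ℤ → H →L[ℂ] H) (N : ℕ) (v : ℕ → H) : ℝ :=
  ∑ i ∈ Finset.range N, ∑ j ∈ Finset.range N, (⟪Q ((i : ℤ) - (j : ℤ)) (v j), v i⟫_ℂ).re

/-- The block Toeplitz matrix `(Q_{i-j})_{i,j≥0}` is (hermitian and) positive
semidefinite on finitely supported sequences. -/
def ToepPos (Q : ℤ → H →L[ℂ] H) : Prop :=
  (∀ k : ℤ, Q (-k) = (Q k).adjoint) ∧ ∀ N v, 0 ≤ toepQF Q N v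

/-- The quadratic form of a block matrix supported on `{0,…,m} × {0,…,m}`. -/
noncomputable def schurQF (m : ℕ) (S : ℕ → ℕ → H →L[ℂ] H) (v : ℕ → H) : ℝ :=
  ∑ i ∈ Finset.range (m + 1), ∑ j ∈ Finset.range (m + 1), (⟪S i j (v j), v i⟫_ℂ).re

/-- `S` is the Schur complement `S(m)` of the positive Toeplitz operator `T_Q` supported
on rows and columns `{0,…,m}`: the maximal positive operator matrix supported there
with `T_Q - S ≥ 0`. -/
def IsSchurToep (Q : ℤ → H →L[ℂ] H) (m : ℕ) (S : ℕ → ℕ → H →L[ℂ] H) : Prop :=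
  (∀ i j, m < i ∨ m < j → S i j = 0) ∧ (∀ i j, (S i j).adjoint = S j i) ∧
    (∀ v, 0 ≤ schurQF m S v) ∧
    (∀ N (v : ℕ → H), (∀ k, N ≤ k → v k = 0) → schurQF m S v ≤ toepQF Q N v) ∧
    ∀ X : ℕ → ℕ → H →L[ℂ] H, (∀ i j, m < i ∨ m < j → X i j = 0) →
      (∀ i j, (X i j).adjoint = X j i) → (∀ v, 0 ≤ schurQF m X v) →
      (∀ N (v : ℕ → H), (∀ k, N ≤ k → v k = 0) → schurQF m X v ≤ toepQF Q N v) →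
      ∀ v, schurQF m X v ≤ schurQF m S v

set_option linter.unusedSectionVars false
namespace SchurToepAux

/-- finitely supported sequences -/
def c00 (H : Type*) [NormedAddCommGroup H] [InnerProductSpace ℂ H] : Submodule ℂ (ℕ → H) where
  carrier := {f | ∃ N, ∀ k, N ≤ k → f k = 0}
  add_mem' := by
    rintro f g ⟨N, hN⟩ ⟨M, hM⟩
    exact ⟨max N M, fun k hk => by
      simp [Pi.add_apply, hN k (le_trans (le_max_left _ _) hk), hM k (le_trans (le_max_right _ _) hk)]⟩
  zero_mem' := ⟨0, fun _ _ => rfl⟩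
  smul_mem' := by
    rintro c f ⟨N, hN⟩
    exact ⟨N, fun k hk => by simp [Pi.smul_apply, hN k hk]⟩

variable (Q : ℤ → H →L[ℂ] H)

/-- The Toeplitz sesquilinear form on sequences. -/
noncomputable def BF (f g : ℕ → H) : ℂ :=
  ∑' i : ℕ, ∑' j : ℕ, ⟪Q ((i : ℤ) - (j : ℤ)) (f j), g i⟫_ℂ

lemma BF_eq {f g : ℕ → H} {N : ℕ} (hf : ∀ k, N ≤ k → f k = 0) (hg : ∀ k, N ≤ k → g k = 0) :
    BF Q f g = ∑ i ∈ Finset.range N, ∑ j ∈ Finset.range N, ⟪Q ((i : ℤ) - (j : ℤ)) (f j), g i⟫_ℂ := by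
  rw [BF]
  rw [tsum_eq_sum (s := Finset.range N) (fun i hi => ?_)]
  · refine Finset.sum_congr rfl fun i _ => ?_
    refine tsum_eq_sum (fun j hj => ?_)
    rw [hf j (by simpa using hj)]
    simp
  · have : g i = 0 := hg i (by simpa using hi)
    simp [this]

lemma BF_re {f : ℕ → H} {N : ℕ} (hf : ∀ k, N ≤ k → f k = 0) :
    (BF Q f f).re = toepQF Q N f := by
  rw [BF_eq Q hf hf, toepQF, Complex.re_sum]
  exact Finset.sum_congr rfl fun i _ => Complex.re_sum _ _

lemma BF_nonneg (hQ : ToepPos Q) (f : ↥(c00 H)) : 0 ≤ (BF Q (f : ℕ → H) (f : ℕ → H)).re := by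
  obtain ⟨N, hN⟩ := f.2
  rw [BF_re Q hN]
  exact hQ.2 N f

lemma BF_conj (hQ1 : ∀ k : ℤ, Q (-k) = (Q k).adjoint) (f g : ↥(c00 H)) :
    (starRingEnd ℂ) (BF Q (g : ℕ → H) (f : ℕ → H)) = BF Q (f : ℕ → H) (g : ℕ → H) := by
  obtain ⟨N, hN⟩ := f.2
  obtain ⟨M, hM⟩ := g.2
  have hfb : ∀ k, max N M ≤ k → (f : ℕ → H) k = 0 := fun k hk => hN k (le_trans (le_max_left _ _) hk)
  have hgb : ∀ k, max N M ≤ k → (g : ℕ → H) k = 0 := fun k hk => hM k (le_trans (le_max_right _ _) hk)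
  rw [BF_eq Q hgb hfb, BF_eq Q hfb hgb, map_sum]
  rw [Finset.sum_comm]
  refine Finset.sum_congr rfl fun j _ => ?_
  rw [map_sum]
  refine Finset.sum_congr rfl fun i _ => ?_
  rw [inner_conj_symm]
  have h2 : Q ((j : ℤ) - i) = (Q ((i : ℤ) - j)).adjoint := by
    rw [← hQ1]; ring_nf
  rw [h2, ContinuousLinearMap.adjoint_inner_right]

lemma BF_add_left (f f' g : ↥(c00 H)) :
    BF Q ((f : ℕ → H) + (f' : ℕ → H)) (g : ℕ → H) =
      BF Q (f : ℕ → H) (g : ℕ → H) + BF Q (f' : ℕ → H) (g : ℕ → H) := by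
  obtain ⟨N, hN⟩ := f.2
  obtain ⟨M, hM⟩ := f'.2
  obtain ⟨P, hP⟩ := g.2
  have hfb : ∀ k, max (max N M) P ≤ k → (f : ℕ → H) k = 0 := fun k hk => hN k (by omega)
  have hf'b : ∀ k, max (max N M) P ≤ k → (f' : ℕ → H) k = 0 := fun k hk => hM k (by omega)
  have hgb : ∀ k, max (max N M) P ≤ k → (g : ℕ → H) k = 0 := fun k hk => hP k (by omega)
  have hsum : ∀ k, max (max N M) P ≤ k → ((f : ℕ → H) + (f' : ℕ → H)) k = 0 := fun k hk => by
    simp [Pi.add_apply, hfb k hk, hf'b k hk]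
  rw [BF_eq Q hsum hgb, BF_eq Q hfb hgb, BF_eq Q hf'b hgb, ← Finset.sum_add_distrib]
  refine Finset.sum_congr rfl fun i _ => ?_
  rw [← Finset.sum_add_distrib]
  refine Finset.sum_congr rfl fun j _ => ?_
  simp [inner_add_left]

lemma BF_smul_left (c : ℂ) (f g : ↥(c00 H)) :
    BF Q (c • (f : ℕ → H)) (g : ℕ → H) = (starRingEnd ℂ) c * BF Q (f : ℕ → H) (g : ℕ → H) := by
  obtain ⟨N, hN⟩ := f.2
  obtain ⟨P, hP⟩ := g.2
  have hfb : ∀ k, max N P ≤ k → (f : ℕ → H) k = 0 := fun k hk => hN k (by omega)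
  have hgb : ∀ k, max N P ≤ k → (g : ℕ → H) k = 0 := fun k hk => hP k (by omega)
  have hsum : ∀ k, max N P ≤ k → (c • (f : ℕ → H)) k = 0 := fun k hk => by
    simp [Pi.smul_apply, hfb k hk]
  rw [BF_eq Q hsum hgb, BF_eq Q hfb hgb, Finset.mul_sum]
  refine Finset.sum_congr rfl fun i _ => ?_
  rw [Finset.mul_sum]
  refine Finset.sum_congr rfl fun j _ => ?_
  simp [inner_smul_left]
  ring


/-- Type synonym carrying the pre-inner-product structure coming from `Q`. -/
def PreW (Q : ℤ → H →L[ℂ] H) (_h : ToepPos Q) : Type _ := ↥(c00 H)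

variable {Q} (h : ToepPos Q)

instance : AddCommGroup (PreW Q h) := inferInstanceAs (AddCommGroup ↥(c00 H))
instance : Module ℂ (PreW Q h) := inferInstanceAs (Module ℂ ↥(c00 H))

/-- identification map -/
def PreW.mk (f : ↥(c00 H)) : PreW Q h := f
/-- identification map -/
def PreW.val (f : PreW Q h) : ↥(c00 H) := f

noncomputable instance : Inner ℂ (PreW Q h) :=
  ⟨fun f g => BF Q ((PreW.val h f : ℕ → H)) ((PreW.val h g : ℕ → H))⟩

noncomputable instance preCore : PreInnerProductSpace.Core ℂ (PreW Q h) where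
  inner f g := BF Q ((PreW.val h f : ℕ → H)) ((PreW.val h g : ℕ → H))
  conj_inner_symm f g := BF_conj Q h.1 (PreW.val h f) (PreW.val h g)
  re_inner_nonneg f := BF_nonneg Q h (PreW.val h f)
  add_left f f' g := BF_add_left Q (PreW.val h f) (PreW.val h f') (PreW.val h g)
  smul_left f g c := BF_smul_left Q c (PreW.val h f) (PreW.val h g)

noncomputable instance : SeminormedAddCommGroup (PreW Q h) :=
  @InnerProductSpace.Core.toSeminormedAddCommGroup ℂ (PreW Q h) _ _ _ (preCore h)

noncomputable instance : InnerProductSpace ℂ (PreW Q h) :=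
  { @InnerProductSpace.Core.toNormedSpace ℂ (PreW Q h) _ _ _ (preCore h) with
    norm_sq_eq_re_inner := fun x => by
      have h0 : (0:ℝ) ≤ (inner (𝕜 := ℂ) x x).re := BF_nonneg Q h (PreW.val h x)
      show (Real.sqrt _) ^ 2 = _
      rw [sq]
      exact Real.mul_self_sqrt h0
    conj_inner_symm := fun x y => BF_conj Q h.1 (PreW.val h x) (PreW.val h y)
    add_left := fun x y z => BF_add_left Q (PreW.val h x) (PreW.val h y) (PreW.val h z)
    smul_left := fun x y c => BF_smul_left Q c (PreW.val h x) (PreW.val h y) }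

/-- The Hilbert space obtained by completion. -/
abbrev W := UniformSpace.Completion (PreW Q h)

/-- The canonical map from finitely supported sequences into `W`. -/
noncomputable def rho : ↥(c00 H) →ₗ[ℂ] W h :=
  (UniformSpace.Completion.toComplL (E := PreW Q h)).toLinearMap.comp
    (LinearMap.id (R := ℂ) (M := ↥(c00 H)))

lemma rho_inner (f g : ↥(c00 H)) :
    ⟪rho h f, rho h g⟫_ℂ = BF Q (f : ℕ → H) (g : ℕ → H) := by
  have := UniformSpace.Completion.inner_coe (𝕜 := ℂ) (E := PreW Q h)
    (PreW.mk h f) (PreW.mk h g)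
  exact this

lemma rho_norm_sq (f : ↥(c00 H)) : ‖rho h f‖ ^ 2 = (BF Q (f : ℕ → H) (f : ℕ → H)).re := by
  rw [@norm_sq_eq_re_inner ℂ, rho_inner]
  simp [RCLike.re_to_complex]


section Geometry

variable (m : ℕ)

/-- single supported at `j` -/
def sngl (j : ℕ) (x : H) : ↥(c00 H) :=
  ⟨fun i => if i = j then x else 0, ⟨j + 1, fun k hk => if_neg (by omega)⟩⟩

lemma sngl_add (j : ℕ) (x y : H) : sngl j (x + y) = sngl j x + sngl j y := by
  apply Subtype.ext
  funext i
  show (if i = j then x + y else 0) = (if i = j then x else 0) + (if i = j then y else 0)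
  split <;> simp

lemma sngl_smul (j : ℕ) (c : ℂ) (x : H) : sngl j (c • x) = c • sngl j x := by
  apply Subtype.ext
  funext i
  show (if i = j then c • x else 0) = c • (if i = j then x else 0)
  split <;> simp

lemma BF_sngl (j : ℕ) (x y : H) :
    BF Q (sngl j x : ℕ → H) (sngl j y : ℕ → H) = ⟪Q 0 x, y⟫_ℂ := by
  have hb : ∀ k, j + 1 ≤ k → (sngl j x : ℕ → H) k = 0 := fun k hk => if_neg (by omega)
  have hb' : ∀ k, j + 1 ≤ k → (sngl j y : ℕ → H) k = 0 := fun k hk => if_neg (by omega)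
  rw [BF_eq Q hb hb']
  rw [Finset.sum_eq_single_of_mem j (Finset.mem_range.2 (by omega)) (fun i _ hij => ?_)]
  · rw [Finset.sum_eq_single_of_mem j (Finset.mem_range.2 (by omega)) (fun i _ hij => ?_)]
    · show ⟪Q ((j:ℤ) - (j:ℤ)) (if j = j then x else 0), if j = j then y else 0⟫_ℂ = _
      simp
    · show ⟪Q ((j:ℤ) - (i:ℤ)) (if i = j then x else 0), _⟫_ℂ = 0
      rw [if_neg hij]
      simp
  · refine Finset.sum_eq_zero fun k _ => ?_
    have hz : (sngl j y : ℕ → H) i = 0 := if_neg hij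
    rw [hz]
    simp

/-- `rho ∘ sngl j` as a continuous linear map. -/
noncomputable def rhoJ (j : ℕ) : H →L[ℂ] W h :=
  LinearMap.mkContinuous
    { toFun := fun x => rho h (sngl j x)
      map_add' := fun x y => by
        show rho h (sngl j (x + y)) = rho h (sngl j x) + rho h (sngl j y)
        rw [sngl_add, map_add]
      map_smul' := fun c x => by
        show rho h (sngl j (c • x)) = c • rho h (sngl j x)
        rw [sngl_smul, map_smul] }
    (Real.sqrt ‖Q 0‖)
    (by
      intro x
      show ‖rho h (sngl j x)‖ ≤ Real.sqrt ‖Q 0‖ * ‖x‖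
      have h2 : ‖rho h (sngl j x)‖ ^ 2 = (BF Q (sngl j x : ℕ → H) (sngl j x : ℕ → H)).re :=
        rho_norm_sq h _
      rw [BF_sngl] at h2
      have hle : (⟪Q 0 x, x⟫_ℂ).re ≤ ‖Q 0‖ * ‖x‖ * ‖x‖ := by
        have h3 : (⟪Q 0 x, x⟫_ℂ).re ≤ ‖⟪Q 0 x, x⟫_ℂ‖ := Complex.re_le_norm _
        have h5 : ‖⟪Q 0 x, x⟫_ℂ‖ ≤ ‖Q 0 x‖ * ‖x‖ := norm_inner_le_norm (𝕜 := ℂ) (Q 0 x) x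
        have h4 : ‖Q 0 x‖ * ‖x‖ ≤ ‖Q 0‖ * ‖x‖ * ‖x‖ :=
          mul_le_mul_of_nonneg_right ((Q 0).le_opNorm x) (norm_nonneg x)
        linarith
      have hnn : (0:ℝ) ≤ ‖rho h (sngl j x)‖ := norm_nonneg _
      have hsq : ‖rho h (sngl j x)‖ ^ 2 ≤ (Real.sqrt ‖Q 0‖ * ‖x‖) ^ 2 := by
        rw [mul_pow, Real.sq_sqrt (norm_nonneg (Q 0))]
        nlinarith
      calc ‖rho h (sngl j x)‖ = Real.sqrt (‖rho h (sngl j x)‖ ^ 2) := (Real.sqrt_sq hnn).symm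
        _ ≤ Real.sqrt ((Real.sqrt ‖Q 0‖ * ‖x‖) ^ 2) := Real.sqrt_le_sqrt hsq
        _ = Real.sqrt ‖Q 0‖ * ‖x‖ := Real.sqrt_sq (by positivity))

lemma rhoJ_apply (j : ℕ) (x : H) : rhoJ h j x = rho h (sngl j x) := rfl

/-- The subspace of sequences vanishing on `{0, …, m-1}`. -/
def Fm : Submodule ℂ ↥(c00 H) where
  carrier := {f | ∀ i, i < m → (f : ℕ → H) i = 0}
  add_mem' := fun hf hg i hi => by
    rw [Submodule.coe_add, Pi.add_apply, hf i hi, hg i hi, add_zero]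
  zero_mem' := fun i _ => rfl
  smul_mem' := fun c f hf i hi => by
    rw [Submodule.coe_smul, Pi.smul_apply, hf i hi, smul_zero]

/-- Closure of the image of `Fm` in `W`. -/
noncomputable def Ksub : Submodule ℂ (W h) := ((Fm m).map (rho h)).topologicalClosure

noncomputable instance : CompleteSpace ↥(Ksub h m) :=
  (Submodule.isClosed_topologicalClosure _).completeSpace_coe

/-- Orthocomplement projection. -/
noncomputable def Pc : W h →L[ℂ] W h :=
  ContinuousLinearMap.id ℂ (W h) - ((Ksub h m).subtypeL.comp (Submodule.orthogonalProjection (Ksub h m)))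

lemma Pc_apply (z : W h) : Pc h m z = z - (Submodule.orthogonalProjection (Ksub h m) z : W h) := rfl

lemma Pc_mem_zero {z : W h} (hz : z ∈ Ksub h m) : Pc h m z = 0 := by
  rw [Pc_apply, show (Submodule.orthogonalProjection (Ksub h m) z : W h) = z from
    Submodule.starProjection_eq_self_iff.2 hz, sub_self]

lemma norm_Pc_le (z : W h) {k : W h} (hk : k ∈ Ksub h m) : ‖Pc h m z‖ ≤ ‖z - k‖ := by
  rw [Pc_apply, show ‖z - (Submodule.orthogonalProjection (Ksub h m) z : W h)‖ = _ from
    Submodule.starProjection_minimal z]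
  exact ciInf_le ⟨0, by rintro _ ⟨x, rfl⟩; positivity⟩ (⟨k, hk⟩ : ↥(Ksub h m))

lemma norm_Pc_le' (z : W h) : ‖Pc h m z‖ ≤ ‖z‖ := by
  simpa using norm_Pc_le h m z (zero_mem (Ksub h m))

/-- truncation to `{0, …, m-1}` -/
def trunc (w : ℕ → H) : ↥(c00 H) :=
  ⟨fun i => if i < m then w i else 0, ⟨m, fun k hk => if_neg (by omega)⟩⟩

lemma trunc_eq_sum (w : ℕ → H) :
    trunc m w = ∑ j ∈ Finset.range m, sngl j (w j) := by
  apply Subtype.ext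
  have hcoe : ((∑ j ∈ Finset.range m, sngl j (w j) : ↥(c00 H)) : ℕ → H) =
      ∑ j ∈ Finset.range m, ((sngl j (w j) : ↥(c00 H)) : ℕ → H) := by
    exact Submodule.coe_sum _ _ _
  rw [hcoe]
  funext i
  rw [Finset.sum_apply]
  show (if i < m then w i else 0) = ∑ j ∈ Finset.range m, (if i = j then w j else 0)
  have : ∀ j, (if i = j then w j else 0) = (if j = i then w j else 0) := by
    intro j; by_cases hij : i = j <;> simp [hij, eq_comm]
  simp_rw [this]
  rw [Finset.sum_ite_eq' (Finset.range m) i w]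
  simp [Finset.mem_range]

/-- The column maps of the shorted operator. -/
noncomputable def Amap (j : ℕ) : H →L[ℂ] W h := (Pc h m).comp (rhoJ h j)

/-- The shorted (Schur-complement) operator matrix. -/
noncomputable def ShOp (i j : ℕ) : H →L[ℂ] H :=
  if hij : i < m ∧ j < m then
    (ContinuousLinearMap.adjoint (Amap h m i)).comp (Amap h m j) else 0

lemma ShOp_herm (i j : ℕ) :
    ContinuousLinearMap.adjoint (ShOp h m i j) = ShOp h m j i := by
  by_cases hij : i < m ∧ j < m
  · rw [ShOp, dif_pos hij, ShOp, dif_pos ⟨hij.2, hij.1⟩, ContinuousLinearMap.adjoint_comp,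
      ContinuousLinearMap.adjoint_adjoint]
  · have hij' : ¬ (j < m ∧ i < m) := fun hc => hij ⟨hc.2, hc.1⟩
    rw [ShOp, dif_neg hij, ShOp, dif_neg hij']
    simp

lemma sum_Amap (w : ℕ → H) :
    ∑ j ∈ Finset.range m, Amap h m j (w j) = Pc h m (rho h (trunc m w)) := by
  rw [trunc_eq_sum, map_sum, map_sum]
  rfl

lemma schurQF_ShOp (hm : 1 ≤ m) (w : ℕ → H) :
    schurQF (m - 1) (ShOp h m) w = ‖∑ j ∈ Finset.range m, Amap h m j (w j)‖ ^ 2 := by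
  have hrange : m - 1 + 1 = m := by omega
  rw [schurQF, hrange]
  have hterm : ∀ i ∈ Finset.range m, ∀ j ∈ Finset.range m,
      (⟪ShOp h m i j (w j), w i⟫_ℂ).re = (⟪Amap h m j (w j), Amap h m i (w i)⟫_ℂ).re := by
    intro i hi j hj
    rw [ShOp, dif_pos ⟨Finset.mem_range.1 hi, Finset.mem_range.1 hj⟩]
    show (⟪(ContinuousLinearMap.adjoint (Amap h m i)) (Amap h m j (w j)), w i⟫_ℂ).re = _
    rw [ContinuousLinearMap.adjoint_inner_left]
  calc ∑ i ∈ Finset.range m, ∑ j ∈ Finset.range m, (⟪ShOp h m i j (w j), w i⟫_ℂ).re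
      = ∑ i ∈ Finset.range m, ∑ j ∈ Finset.range m,
          (⟪Amap h m j (w j), Amap h m i (w i)⟫_ℂ).re :=
        Finset.sum_congr rfl fun i hi => Finset.sum_congr rfl fun j hj => hterm i hi j hj
    _ = (⟪∑ j ∈ Finset.range m, Amap h m j (w j), ∑ i ∈ Finset.range m, Amap h m i (w i)⟫_ℂ).re := by
        rw [inner_sum, Complex.re_sum]
        refine Finset.sum_congr rfl fun i _ => ?_
        rw [sum_inner, Complex.re_sum]
    _ = ‖∑ j ∈ Finset.range m, Amap h m j (w j)‖ ^ 2 := by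
        rw [← @inner_self_eq_norm_sq ℂ]
        rfl

end Geometry

section Splitting

variable (Q) (m : ℕ)

/-- generic double-sum splitting -/
lemma double_split (M : ℕ) (a : ℕ → ℕ → ℝ) :
    ∑ i ∈ Finset.range (M + 1), ∑ j ∈ Finset.range (M + 1), a i j =
      a 0 0 + (∑ i ∈ Finset.range M, (a (i + 1) 0 + a 0 (i + 1))) +
        ∑ i ∈ Finset.range M, ∑ j ∈ Finset.range M, a (i + 1) (j + 1) := by
  rw [Finset.sum_range_succ' (fun i => ∑ j ∈ Finset.range (M + 1), a i j) M]
  simp_rw [Finset.sum_range_succ' (fun j => a _ j) M]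
  rw [Finset.sum_add_distrib, Finset.sum_add_distrib]
  ring

/-- cross terms -/
noncomputable def crossT (M : ℕ) (x : H) (w : ℕ → H) : ℝ :=
  ∑ i ∈ Finset.range M,
    ((⟪Q ((i : ℤ) + 1) x, w i⟫_ℂ).re + (⟪Q (-((i : ℤ) + 1)) (w i), x⟫_ℂ).re)

lemma toepQF_succ (N : ℕ) (v : ℕ → H) :
    toepQF Q (N + 1) v = (⟪Q 0 (v 0), v 0⟫_ℂ).re + crossT Q N (v 0) (fun k => v (k + 1)) +
      toepQF Q N (fun k => v (k + 1)) := by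
  rw [toepQF, double_split]
  refine congrArg₂ _ (congrArg₂ _ ?_ ?_) ?_
  · norm_num
  · refine Finset.sum_congr rfl fun i _ => ?_
    have c1 : ((i + 1 : ℕ) : ℤ) - ((0 : ℕ) : ℤ) = (i : ℤ) + 1 := by push_cast; ring
    have c2 : ((0 : ℕ) : ℤ) - ((i + 1 : ℕ) : ℤ) = -((i : ℤ) + 1) := by push_cast; ring
    rw [c1, c2]
  · rw [toepQF]
    refine Finset.sum_congr rfl fun i _ => Finset.sum_congr rfl fun j _ => ?_
    have c3 : ((i + 1 : ℕ) : ℤ) - ((j + 1 : ℕ) : ℤ) = (i : ℤ) - (j : ℤ) := by push_cast; ring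
    rw [c3]

lemma schurQF_split (M : ℕ) (A : ℕ → ℕ → H →L[ℂ] H) (v : ℕ → H) :
    schurQF (M + 1) A v = (⟪A 0 0 (v 0), v 0⟫_ℂ).re +
      (∑ i ∈ Finset.range (M + 1),
        ((⟪A (i + 1) 0 (v 0), v (i + 1)⟫_ℂ).re + (⟪A 0 (i + 1) (v (i + 1)), v 0⟫_ℂ).re)) +
      schurQF M (fun i j => A (i + 1) (j + 1)) (fun k => v (k + 1)) := by
  rw [schurQF, schurQF, double_split]

lemma crossT_band (hband : ∀ k : ℤ, (m : ℤ) < |k| → Q k = 0) {M : ℕ} (hM : m ≤ M) (x : H)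
    (w : ℕ → H) : crossT Q M x w = crossT Q m x w := by
  rw [crossT, crossT]
  rw [← Finset.sum_subset (Finset.range_subset_range.2 hM) (fun i _ hi => ?_)]
  have him : m ≤ i := by simpa using hi
  have h1 : Q ((i : ℤ) + 1) = 0 := hband _ (by rw [abs_of_nonneg (by positivity)]; omega)
  have h2 : Q (-((i : ℤ) + 1)) = 0 := hband _ (by rw [abs_neg, abs_of_nonneg (by positivity)]; omega)
  rw [h1, h2]
  simp

lemma crossT_congr {M : ℕ} (x : H) {w w' : ℕ → H} (hw : ∀ i, i < M → w i = w' i) :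
    crossT Q M x w = crossT Q M x w' := by
  refine Finset.sum_congr rfl fun i hi => ?_
  rw [hw i (Finset.mem_range.1 hi)]

lemma crossT_supp {M : ℕ} (x : H) {w : ℕ → H} {N : ℕ} (hN : N ≤ M) (hw : ∀ i, N ≤ i → w i = 0) :
    crossT Q M x w = crossT Q N x w := by
  rw [crossT, crossT]
  rw [← Finset.sum_subset (Finset.range_subset_range.2 hN) (fun i _ hi => ?_)]
  have him : N ≤ i := by simpa using hi
  rw [hw i him]
  simp

lemma crossT_zero_left (M : ℕ) (w : ℕ → H) : crossT Q M 0 w = 0 := by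
  refine Finset.sum_eq_zero fun i _ => ?_
  simp

end Splitting

section Short

variable (m : ℕ)

lemma ShOp_pos (hm : 1 ≤ m) (v : ℕ → H) : 0 ≤ schurQF (m - 1) (ShOp h m) v := by
  rw [schurQF_ShOp h m hm]
  positivity

lemma ShOp_dom (hm : 1 ≤ m) (N : ℕ) (v : ℕ → H) (hv : ∀ k, N ≤ k → v k = 0) :
    schurQF (m - 1) (ShOp h m) v ≤ toepQF Q N v := by
  set vC : ↥(c00 H) := ⟨v, ⟨N, hv⟩⟩ with hvC
  have hmem : vC - trunc m v ∈ Fm m := by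
    intro i hi
    show v i - (if i < m then v i else 0) = 0
    rw [if_pos hi, sub_self]
  have hK : rho h (vC - trunc m v) ∈ Ksub h m :=
    Submodule.le_topologicalClosure _ (Submodule.mem_map_of_mem hmem)
  have h0 : Pc h m (rho h vC) - Pc h m (rho h (trunc m v)) = 0 := by
    rw [← map_sub, ← map_sub]
    exact Pc_mem_zero h m hK
  have hPceq : Pc h m (rho h (trunc m v)) = Pc h m (rho h vC) := (sub_eq_zero.1 h0).symm
  rw [schurQF_ShOp h m hm, sum_Amap, hPceq]
  have h1 : ‖Pc h m (rho h vC)‖ ≤ ‖rho h vC‖ := norm_Pc_le' h m _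
  have h2 : ‖rho h vC‖ ^ 2 = toepQF Q N v := by
    rw [rho_norm_sq h vC]
    exact BF_re Q hv
  calc ‖Pc h m (rho h vC)‖ ^ 2 ≤ ‖rho h vC‖ ^ 2 := by
        exact pow_le_pow_left₀ (norm_nonneg _) h1 2
    _ = toepQF Q N v := h2

lemma key_approx (z : W h) {ε : ℝ} (hε : 0 < ε) :
    ∃ g ∈ Fm m, ‖z - rho h g‖ ≤ ‖Pc h m z‖ + ε := by
  set k : W h := (Submodule.orthogonalProjection (Ksub h m) z : W h) with hkdef
  have hk : k ∈ Ksub h m := (Submodule.orthogonalProjection (Ksub h m) z).2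
  have hkc : k ∈ closure ((((Fm m).map (rho h)) : Submodule ℂ (W h)) : Set (W h)) := by
    rw [← Submodule.topologicalClosure_coe]
    exact hk
  rw [Metric.mem_closure_iff] at hkc
  obtain ⟨b, hb, hdist⟩ := hkc ε hε
  obtain ⟨g, hg, rfl⟩ := hb
  refine ⟨g, hg, ?_⟩
  have hsplit : z - rho h g = (z - k) + (k - rho h g) := by abel
  rw [hsplit]
  have hPz : ‖z - k‖ = ‖Pc h m z‖ := by rw [Pc_apply]
  calc ‖(z - k) + (k - rho h g)‖ ≤ ‖z - k‖ + ‖k - rho h g‖ := norm_add_le _ _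
    _ ≤ ‖Pc h m z‖ + ε := by
        rw [hPz]
        have : ‖k - rho h g‖ = dist k (rho h g) := (dist_eq_norm _ _).symm
        have hd2 : ‖k - rho h g‖ ≤ ε := by rw [this]; exact le_of_lt hdist
        linarith

lemma key_pos (hband : ∀ k : ℤ, (m : ℤ) < |k| → Q k = 0) (hm : 1 ≤ m) (x : H) (w : ℕ → H) :
    0 ≤ (⟪Q 0 x, x⟫_ℂ).re + crossT Q m x w + schurQF (m - 1) (ShOp h m) w := by
  rw [schurQF_ShOp h m hm w, sum_Amap]
  set z := rho h (trunc m w) with hzdef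
  set b := ‖Pc h m z‖ with hbdef
  have hb0 : 0 ≤ b := norm_nonneg _
  set A := (⟪Q 0 x, x⟫_ℂ).re + crossT Q m x w with hAdef
  show 0 ≤ A + b ^ 2
  have main : ∀ ε : ℝ, 0 < ε → 0 ≤ A + (b + ε) ^ 2 := by
    intro ε hε
    obtain ⟨g, hg, hge⟩ := key_approx h m z hε
    set d : ↥(c00 H) := trunc m w - g with hddef
    obtain ⟨N₀, hN₀⟩ := d.2
    set N := max N₀ m with hNdef
    have hdb : ∀ k, N ≤ k → (d : ℕ → H) k = 0 := fun k hk => hN₀ k (by omega)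
    set u : ℕ → H := fun k => if k = 0 then x else (d : ℕ → H) (k - 1) with hudef
    have h0 : 0 ≤ toepQF Q (N + 1) u := h.2 _ _
    rw [toepQF_succ] at h0
    have hus : (fun k => u (k + 1)) = (d : ℕ → H) := by
      funext k
      simp [hudef]
    have hu0 : u 0 = x := by simp [hudef]
    rw [hus, hu0] at h0
    have hcross : crossT Q N x (d : ℕ → H) = crossT Q m x w := by
      rw [crossT_band Q m hband (by omega : m ≤ N) x]
      refine crossT_congr Q x fun i hi => ?_
      show (trunc m w : ℕ → H) i - (g : ℕ → H) i = w i
      rw [hg i hi]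
      show (if i < m then w i else 0) - 0 = w i
      rw [if_pos hi, sub_zero]
    have htoep : toepQF Q N (d : ℕ → H) = ‖z - rho h g‖ ^ 2 := by
      rw [← BF_re Q hdb, ← rho_norm_sq h d, hddef, map_sub]
    have h0' : 0 ≤ A + ‖z - rho h g‖ ^ 2 := by
      rw [hcross, htoep] at h0
      exact h0
    have hsq : ‖z - rho h g‖ ^ 2 ≤ (b + ε) ^ 2 := by
      exact pow_le_pow_left₀ (norm_nonneg _) hge 2
    linarith
  by_contra hc
  push_neg at hc
  set δ := -(A + b ^ 2) with hδdef
  have hδ0 : 0 < δ := by simp only [hδdef]; linarith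
  have h2b : (0:ℝ) < 2 * b + 2 := by linarith
  have hεpos : 0 < min 1 (δ / (2 * b + 2)) := lt_min one_pos (div_pos hδ0 h2b)
  have hmain := main _ hεpos
  set ε := min 1 (δ / (2 * b + 2)) with hεdef
  have hε1 : ε ≤ 1 := min_le_left _ _
  have hε2 : ε ≤ δ / (2 * b + 2) := min_le_right _ _
  have hmul : ε * (2 * b + 2) ≤ δ := by
    rw [← le_div_iff₀ h2b]
    exact hε2
  have hsq : ε ^ 2 ≤ ε := by nlinarith [hεpos.le, hε1]
  nlinarith [hmain, hmul, hsq, hεpos]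

end Short

section Polar

lemma clm_zero_of_re_inner (A : H →L[ℂ] H) (h : ∀ y x : H, (⟪A y, x⟫_ℂ).re = 0) : A = 0 := by
  have hz : ∀ y x : H, ⟪A y, x⟫_ℂ = 0 := by
    intro y x
    have h1 := h y x
    have h2 := h y (Complex.I • x)
    rw [inner_smul_right] at h2
    apply Complex.ext h1
    simp only [Complex.mul_re, Complex.I_re, Complex.I_im, zero_mul, one_mul, zero_sub,
      neg_eq_zero] at h2
    simpa using h2
  ext y
  exact inner_self_eq_zero.1 (hz y (A y))

lemma selfadj_eq_zero (A : H →L[ℂ] H) (hA : ContinuousLinearMap.adjoint A = A)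
    (h0 : ∀ x : H, (⟪A x, x⟫_ℂ).re = 0) : A = 0 := by
  have hsym : ∀ x : H, ⟪A x, x⟫_ℂ = (starRingEnd ℂ) ⟪A x, x⟫_ℂ := by
    intro x
    conv_lhs => rw [← hA]
    rw [ContinuousLinearMap.adjoint_inner_left, ← inner_conj_symm]
  have hz : ∀ x : H, ⟪A x, x⟫_ℂ = 0 := by
    intro x
    apply Complex.ext (h0 x)
    have := hsym x
    have him := congrArg Complex.im this
    simp only [Complex.conj_im] at him
    simp only [Complex.zero_im]
    linarith
  have := (inner_map_self_eq_zero (A : H →ₗ[ℂ] H)).1 (fun x => hz x)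
  apply ContinuousLinearMap.coe_injective
  rw [this]
  rfl

/-- single-supported plain sequence -/
def singl (p : ℕ) (x : H) : ℕ → H := fun k => if k = p then x else 0

lemma schurQF_singl (M : ℕ) (G : ℕ → ℕ → H →L[ℂ] H) (p : ℕ) (hp : p < M + 1) (x : H) :
    schurQF M G (singl p x) = (⟪G p p x, x⟫_ℂ).re := by
  rw [schurQF]
  rw [Finset.sum_eq_single_of_mem p (Finset.mem_range.2 hp) (fun i _ hip => ?_)]
  · rw [Finset.sum_eq_single_of_mem p (Finset.mem_range.2 hp) (fun j _ hjp => ?_)]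
    · rw [show singl p x p = x from if_pos rfl]
    · rw [show singl p x j = 0 from if_neg hjp]
      simp
  · refine Finset.sum_eq_zero fun j _ => ?_
    rw [show singl p x i = 0 from if_neg hip]
    simp

/-- pair-supported plain sequence -/
def pairv (p q : ℕ) (x y : H) : ℕ → H := fun k => if k = p then x else if k = q then y else 0

lemma schurQF_pairv (M : ℕ) (G : ℕ → ℕ → H →L[ℂ] H) (p q : ℕ) (hp : p < M + 1)
    (hq : q < M + 1) (hpq : p ≠ q) (x y : H) :
    schurQF M G (pairv p q x y) = (⟪G p p x, x⟫_ℂ).re + (⟪G p q y, x⟫_ℂ).re +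
      ((⟪G q p x, y⟫_ℂ).re + (⟪G q q y, y⟫_ℂ).re) := by
  have hvp : pairv p q x y p = x := if_pos rfl
  have hvq : pairv p q x y q = y := by
    rw [pairv, if_neg (Ne.symm hpq), if_pos rfl]
  have hv0 : ∀ k, k ≠ p → k ≠ q → pairv p q x y k = 0 := fun k h1 h2 => by
    rw [pairv, if_neg h1, if_neg h2]
  have hsub : ({p, q} : Finset ℕ) ⊆ Finset.range (M + 1) := by
    intro k hk
    rcases Finset.mem_insert.1 hk with rfl | hk
    · exact Finset.mem_range.2 hp
    · rw [Finset.mem_singleton.1 hk]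
      exact Finset.mem_range.2 hq
  have hinner : ∀ i, ∑ j ∈ Finset.range (M + 1), (⟪G i j (pairv p q x y j), pairv p q x y i⟫_ℂ).re
      = (⟪G i p x, pairv p q x y i⟫_ℂ).re + (⟪G i q y, pairv p q x y i⟫_ℂ).re := by
    intro i
    rw [← Finset.sum_subset hsub (fun j _ hj => ?_)]
    · rw [Finset.sum_pair hpq, hvp, hvq]
    · have h1 : j ≠ p := fun hc => hj (by rw [hc]; exact Finset.mem_insert_self _ _)
      have h2 : j ≠ q := fun hc => hj (by rw [hc]; exact Finset.mem_insert_of_mem (Finset.mem_singleton_self _))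
      rw [hv0 j h1 h2]
      simp
  rw [schurQF]
  rw [← Finset.sum_subset hsub (fun i _ hi => ?_)]
  · rw [Finset.sum_pair hpq]
    rw [hinner p, hinner q, hvp, hvq]
  · have h1 : i ≠ p := fun hc => hi (by rw [hc]; exact Finset.mem_insert_self _ _)
    have h2 : i ≠ q := fun hc => hi (by rw [hc]; exact Finset.mem_insert_of_mem (Finset.mem_singleton_self _))
    refine Finset.sum_eq_zero fun j _ => ?_
    rw [hv0 i h1 h2]
    simp

lemma blocks_eq_zero (M : ℕ) (G : ℕ → ℕ → H →L[ℂ] H)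
    (hherm : ∀ i j, ContinuousLinearMap.adjoint (G i j) = G j i)
    (h0 : ∀ v, schurQF M G v = 0) :
    ∀ i j, i < M + 1 → j < M + 1 → G i j = 0 := by
  have hdiag : ∀ p, p < M + 1 → G p p = 0 := by
    intro p hp
    refine selfadj_eq_zero (G p p) (hherm p p) fun x => ?_
    have := h0 (singl p x)
    rwa [schurQF_singl M G p hp x] at this
  intro i j hi hj
  by_cases hij : i = j
  · rw [hij]; exact hdiag j hj
  · have hre : ∀ y x : H, (⟪G i j y, x⟫_ℂ).re = 0 := by
      intro y x
      have hp := h0 (pairv i j x y)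
      rw [schurQF_pairv M G i j hi hj hij x y, hdiag i hi, hdiag j hj] at hp
      simp only [ContinuousLinearMap.zero_apply, inner_zero_left, Complex.zero_re, zero_add,
        add_zero] at hp
      have hconj : (⟪G j i x, y⟫_ℂ).re = (⟪G i j y, x⟫_ℂ).re := by
        rw [← hherm i j, ContinuousLinearMap.adjoint_inner_left]
        exact inner_re_symm (𝕜 := ℂ) x (G i j y)
      linarith
    exact clm_zero_of_re_inner (G i j) hre

lemma schurQF_sub (M : ℕ) (S X : ℕ → ℕ → H →L[ℂ] H) (v : ℕ → H) :
    schurQF M (fun i j => S i j - X i j) v = schurQF M S v - schurQF M X v := by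
  rw [schurQF, schurQF, schurQF, ← Finset.sum_sub_distrib]
  refine Finset.sum_congr rfl fun i _ => ?_
  rw [← Finset.sum_sub_distrib]
  refine Finset.sum_congr rfl fun j _ => ?_
  rw [ContinuousLinearMap.sub_apply, inner_sub_left, Complex.sub_re]

end Polar

section Xop

/-- candidate Schur complement matrix built from `Q` and `S'` -/
def Xop (Q : ℤ → H →L[ℂ] H) (S' : ℕ → ℕ → H →L[ℂ] H) : ℕ → ℕ → H →L[ℂ] H
  | 0, 0 => Q 0
  | (i+1), 0 => Q ((i : ℤ) + 1)
  | 0, (j+1) => Q (-((j : ℤ) + 1))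
  | (i+1), (j+1) => S' i j

end Xop
end SchurToepAux

open SchurToepAux in
/-- For a banded positive Toeplitz operator (`Q_j = 0` for `|j| > m`), the Schur
complement `S(m)` has the form `[[Q_0, B*],[B, S(m-1)]]` with `B = col(Q_1,…,Q_m)`. -/
theorem schur_toeplitz_banded_first_column (Q : ℤ → H →L[ℂ] H) (hQ : ToepPos Q)
    (m : ℕ) (hm : 1 ≤ m) (hband : ∀ k : ℤ, (m : ℤ) < |k| → Q k = 0)
    (S S' : ℕ → ℕ → H →L[ℂ] H)
    (hS : IsSchurToep Q m S) (hS' : IsSchurToep Q (m - 1) S') :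
    (∀ i : ℕ, i ≤ m → S i 0 = Q (i : ℤ)) ∧
      ∀ i j : ℕ, S (i + 1) (j + 1) = S' i j := by
  classical
  obtain ⟨m', rfl⟩ : ∃ m'', m = m'' + 1 := ⟨m - 1, by omega⟩
  have hm1 : m' + 1 - 1 = m' := rfl
  rw [hm1] at hS'
  set X : ℕ → ℕ → H →L[ℂ] H := Xop Q S' with hXdef
  -- X support
  have hXsupp : ∀ i j, m' + 1 < i ∨ m' + 1 < j → X i j = 0 := by
    intro i j hij
    match i, j with
    | 0, 0 => omega
    | (i+1), 0 =>
      show Q ((i : ℤ) + 1) = 0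
      apply hband
      rw [abs_of_nonneg (by positivity)]
      have : m' + 1 < i + 1 := by omega
      push_cast
      omega
    | 0, (j+1) =>
      show Q (-((j : ℤ) + 1)) = 0
      apply hband
      rw [abs_neg, abs_of_nonneg (by positivity)]
      have : m' + 1 < j + 1 := by omega
      push_cast
      omega
    | (i+1), (j+1) =>
      show S' i j = 0
      exact hS'.1 i j (by omega)
  -- X hermitian
  have hXherm : ∀ i j, ContinuousLinearMap.adjoint (X i j) = X j i := by
    intro i j
    match i, j with
    | 0, 0 =>
      show ContinuousLinearMap.adjoint (Q 0) = Q 0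
      have := hQ.1 0
      rw [neg_zero] at this
      exact this.symm
    | (i+1), 0 =>
      show ContinuousLinearMap.adjoint (Q ((i : ℤ) + 1)) = Q (-((i : ℤ) + 1))
      exact (hQ.1 ((i : ℤ) + 1)).symm
    | 0, (j+1) =>
      show ContinuousLinearMap.adjoint (Q (-((j : ℤ) + 1))) = Q ((j : ℤ) + 1)
      have := hQ.1 (-((j : ℤ) + 1))
      rw [neg_neg] at this
      exact this.symm
    | (i+1), (j+1) =>
      show ContinuousLinearMap.adjoint (S' i j) = S' j i
      exact hS'.2.1 i j
  -- split identity for X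
  have hXsplit : ∀ v : ℕ → H, schurQF (m' + 1) X v =
      (⟪Q 0 (v 0), v 0⟫_ℂ).re + crossT Q (m' + 1) (v 0) (fun k => v (k + 1)) +
        schurQF m' S' (fun k => v (k + 1)) := by
    intro v
    rw [schurQF_split m' X v]
    rfl
  -- split identity for S
  have hSsplit : ∀ v : ℕ → H, schurQF (m' + 1) S v =
      (⟪S 0 0 (v 0), v 0⟫_ℂ).re +
        (∑ i ∈ Finset.range (m' + 1),
          ((⟪S (i + 1) 0 (v 0), v (i + 1)⟫_ℂ).re + (⟪S 0 (i + 1) (v (i + 1)), v 0⟫_ℂ).re)) +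
        schurQF m' (fun i j => S (i + 1) (j + 1)) (fun k => v (k + 1)) :=
    fun v => schurQF_split m' S v
  -- Step 1 : the shorted operator is dominated by S'
  have hShsupp : ∀ i j, m' < i ∨ m' < j → ShOp hQ (m' + 1) i j = 0 := by
    intro i j hij
    rw [ShOp, dif_neg (by omega)]
  have hShmax : ∀ w, schurQF m' (ShOp hQ (m' + 1)) w ≤ schurQF m' S' w := by
    refine hS'.2.2.2.2 (ShOp hQ (m' + 1)) hShsupp (ShOp_herm hQ (m' + 1)) ?_ ?_
    · intro v
      exact ShOp_pos hQ (m' + 1) (by omega) v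
    · intro N v hv
      exact ShOp_dom hQ (m' + 1) (by omega) N v hv
  -- Step 2 : X is positive and dominated by T
  have hXpos : ∀ v, 0 ≤ schurQF (m' + 1) X v := by
    intro v
    rw [hXsplit v]
    have h1 := key_pos hQ (m' + 1) hband (by omega) (v 0) (fun k => v (k + 1))
    have h2 := hShmax (fun k => v (k + 1))
    rw [hm1] at h1
    linarith
  have hXdom : ∀ N (v : ℕ → H), (∀ k, N ≤ k → v k = 0) →
      schurQF (m' + 1) X v ≤ toepQF Q N v := by
    intro N v hv
    match N with
    | 0 =>
      have hv0 : ∀ k, v k = 0 := fun k => hv k (Nat.zero_le k)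
      have h1 : schurQF (m' + 1) X v = 0 := by
        rw [schurQF]
        refine Finset.sum_eq_zero fun i _ => Finset.sum_eq_zero fun j _ => ?_
        rw [hv0 i]
        simp
      have h2 : toepQF Q 0 v = 0 := by
        rw [toepQF]
        simp
      rw [h1, h2]
    | (N' + 1) =>
      rw [hXsplit v, toepQF_succ Q N' v]
      have hdom' := hS'.2.2.2.1 N' (fun k => v (k + 1)) (fun k hk => hv (k + 1) (by omega))
      have hcr : crossT Q (m' + 1) (v 0) (fun k => v (k + 1)) =
          crossT Q N' (v 0) (fun k => v (k + 1)) := by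
        rcases le_total (m' + 1) N' with hle | hle
        · exact (crossT_band Q (m' + 1) hband hle (v 0) _).symm
        · exact crossT_supp Q (v 0) hle (fun i hi => hv (i + 1) (by omega))
      rw [hcr]
      linarith
  -- Step 3 : X is dominated by S
  have hXS : ∀ v, schurQF (m' + 1) X v ≤ schurQF (m' + 1) S v :=
    hS.2.2.2.2 X hXsupp hXherm hXpos hXdom
  -- Step 4 : the shifted S is dominated by S'
  set Y : ℕ → ℕ → H →L[ℂ] H := fun i j => S (i + 1) (j + 1) with hYdef
  set lify : (ℕ → H) → (ℕ → H) := fun w k => if k = 0 then 0 else w (k - 1) with hlifydef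
  have hlify0 : ∀ w, lify w 0 = 0 := fun w => rfl
  have hlifys : ∀ w, (fun k => lify w (k + 1)) = w := by
    intro w
    funext k
    simp [hlifydef]
  have hYeq : ∀ w, schurQF m' Y w = schurQF (m' + 1) S (lify w) := by
    intro w
    rw [hSsplit (lify w), hlify0, hlifys]
    simp
  have hYmax : ∀ w, schurQF m' Y w ≤ schurQF m' S' w := by
    refine hS'.2.2.2.2 Y ?_ ?_ ?_ ?_
    · intro i j hij
      exact hS.1 (i + 1) (j + 1) (by omega)
    · intro i j
      exact hS.2.1 (i + 1) (j + 1)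
    · intro w
      rw [hYeq w]
      exact hS.2.2.1 _
    · intro N w hw
      rw [hYeq w]
      have hsupp : ∀ k, N + 1 ≤ k → lify w k = 0 := by
        intro k hk
        have hk0 : k ≠ 0 := by omega
        simp only [hlifydef, if_neg hk0]
        exact hw (k - 1) (by omega)
      have h1 := hS.2.2.2.1 (N + 1) (lify w) hsupp
      rw [toepQF_succ Q N (lify w), hlify0, hlifys, crossT_zero_left] at h1
      have : (⟪Q 0 (0 : H), (0 : H)⟫_ℂ).re = 0 := by simp
      linarith
  -- Step 5 : the shifted block identity
  have hconc2 : ∀ i j : ℕ, S (i + 1) (j + 1) = S' i j := by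
    set E : ℕ → ℕ → H →L[ℂ] H := fun i j => S (i + 1) (j + 1) - S' i j with hEdef
    have hEherm : ∀ i j, ContinuousLinearMap.adjoint (E i j) = E j i := by
      intro i j
      simp only [hEdef]
      rw [map_sub, hS.2.1, hS'.2.1]
    have hE0 : ∀ w, schurQF m' E w = 0 := by
      intro w
      have hle : schurQF m' E w ≤ 0 := by
        rw [hEdef, schurQF_sub m' Y S' w]
        have := hYmax w
        linarith
      have hge : 0 ≤ schurQF m' E w := by
        rw [hEdef, schurQF_sub m' Y S' w]
        have h1 := hXS (lify w)
        rw [hXsplit (lify w), hlify0, hlifys, crossT_zero_left] at h1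
        rw [← hYeq w] at h1
        have h2 : (⟪Q 0 (0 : H), (0 : H)⟫_ℂ).re = 0 := by simp
        linarith
      linarith
    intro i j
    rcases le_or_gt (max i j) m' with hij | hij
    · have := blocks_eq_zero m' E hEherm hE0 i j (by omega) (by omega)
      rw [hEdef] at this
      exact sub_eq_zero.1 this
    · have h1 : S (i + 1) (j + 1) = 0 := hS.1 (i + 1) (j + 1) (by omega)
      have h2 : S' i j = 0 := hS'.1 i j (by omega)
      rw [h1, h2]
  -- Step 6 : the first column
  set D : ℕ → ℕ → H →L[ℂ] H := fun i j => S i j - X i j with hDdef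
  have hDherm : ∀ i j, ContinuousLinearMap.adjoint (D i j) = D j i := by
    intro i j
    simp only [hDdef]
    rw [map_sub, hS.2.1, hXherm]
  have hDpos : ∀ v, 0 ≤ schurQF (m' + 1) D v := by
    intro v
    rw [hDdef, schurQF_sub]
    have := hXS v
    linarith
  have hDshift : ∀ i j, D (i + 1) (j + 1) = 0 := by
    intro i j
    show S (i + 1) (j + 1) - X (i + 1) (j + 1) = 0
    have : X (i + 1) (j + 1) = S' i j := rfl
    rw [this, hconc2 i j, sub_self]
  -- first column entries vanish for D
  have hDcol : ∀ i, i < m' + 1 → D (i + 1) 0 = 0 := by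
    intro i him
    ext x
    show D (i + 1) 0 x = 0
    have key : ∀ t : ℝ, 0 ≤ (⟪D 0 0 x, x⟫_ℂ).re -
        2 * t * ∑ k ∈ Finset.range (m' + 1), ‖D (k + 1) 0 x‖ ^ 2 := by
      intro t
      set v : ℕ → H := fun k => if k = 0 then x else (-(t : ℂ)) • (D k 0 x) with hvdef
      have hv0 : v 0 = x := rfl
      have hvs : ∀ k : ℕ, v (k + 1) = (-(t : ℂ)) • (D (k + 1) 0 x) := fun k => rfl
      have hsp := schurQF_split m' D v
      have hlast : schurQF m' (fun i j => D (i + 1) (j + 1)) (fun k => v (k + 1)) = 0 := by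
        rw [schurQF]
        refine Finset.sum_eq_zero fun a _ => Finset.sum_eq_zero fun b _ => ?_
        rw [hDshift a b]
        simp
      have hmid : ∀ k ∈ Finset.range (m' + 1),
          (⟪D (k + 1) 0 (v 0), v (k + 1)⟫_ℂ).re + (⟪D 0 (k + 1) (v (k + 1)), v 0⟫_ℂ).re =
            -(2 * t * ‖D (k + 1) 0 x‖ ^ 2) := by
        intro k _
        rw [hv0, hvs k]
        have e1 : (⟪D (k + 1) 0 x, (-(t : ℂ)) • (D (k + 1) 0 x)⟫_ℂ).re =
            -(t * ‖D (k + 1) 0 x‖ ^ 2) := by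
          rw [inner_smul_right]
          have : (⟪D (k + 1) 0 x, D (k + 1) 0 x⟫_ℂ).re = ‖D (k + 1) 0 x‖ ^ 2 := by
            rw [← @inner_self_eq_norm_sq ℂ]
            rfl
          rw [Complex.mul_re]
          have him0 : (⟪D (k + 1) 0 x, D (k + 1) 0 x⟫_ℂ).im = 0 := by
            rw [← inner_self_im (𝕜 := ℂ) (x := D (k + 1) 0 x)]
            rfl
          simp [him0, this]
          left; rw [← Complex.ofReal_pow, Complex.ofReal_re]
        have e2 : (⟪D 0 (k + 1) ((-(t : ℂ)) • (D (k + 1) 0 x)), x⟫_ℂ).re =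
            -(t * ‖D (k + 1) 0 x‖ ^ 2) := by
          rw [map_smul, inner_smul_left]
          have hadj : D 0 (k + 1) = ContinuousLinearMap.adjoint (D (k + 1) 0) :=
            (hDherm (k + 1) 0).symm
          have : ⟪D 0 (k + 1) (D (k + 1) 0 x), x⟫_ℂ = ⟪D (k + 1) 0 x, D (k + 1) 0 x⟫_ℂ := by
            rw [hadj, ContinuousLinearMap.adjoint_inner_left]
          rw [this]
          have hre : (⟪D (k + 1) 0 x, D (k + 1) 0 x⟫_ℂ).re = ‖D (k + 1) 0 x‖ ^ 2 := by
            rw [← @inner_self_eq_norm_sq ℂ]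
            rfl
          have him0 : (⟪D (k + 1) 0 x, D (k + 1) 0 x⟫_ℂ).im = 0 := by
            rw [← inner_self_im (𝕜 := ℂ) (x := D (k + 1) 0 x)]
            rfl
          rw [Complex.mul_re]
          simp [him0, hre]
          left; rw [← Complex.ofReal_pow, Complex.ofReal_re]
        rw [e1, e2]
        ring
      rw [Finset.sum_congr rfl hmid, hlast, hv0] at hsp
      have hsum : ∑ k ∈ Finset.range (m' + 1), -(2 * t * ‖D (k + 1) 0 x‖ ^ 2) =
          -(2 * t * ∑ k ∈ Finset.range (m' + 1), ‖D (k + 1) 0 x‖ ^ 2) := by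
        rw [Finset.mul_sum, ← Finset.sum_neg_distrib]
      rw [hsum] at hsp
      have := hDpos v
      rw [hsp] at this
      linarith
    have hSm : ∑ k ∈ Finset.range (m' + 1), ‖D (k + 1) 0 x‖ ^ 2 = 0 := by
      by_contra hne
      have hge : (0:ℝ) ≤ ∑ k ∈ Finset.range (m' + 1), ‖D (k + 1) 0 x‖ ^ 2 :=
        Finset.sum_nonneg fun k _ => by positivity
      have hpos : (0:ℝ) < ∑ k ∈ Finset.range (m' + 1), ‖D (k + 1) 0 x‖ ^ 2 :=
        lt_of_le_of_ne hge (Ne.symm hne)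
      have hkey := key (((⟪D 0 0 x, x⟫_ℂ).re + 1) /
        (2 * ∑ k ∈ Finset.range (m' + 1), ‖D (k + 1) 0 x‖ ^ 2))
      have heq : 2 * (((⟪D 0 0 x, x⟫_ℂ).re + 1) /
          (2 * ∑ k ∈ Finset.range (m' + 1), ‖D (k + 1) 0 x‖ ^ 2)) *
          (∑ k ∈ Finset.range (m' + 1), ‖D (k + 1) 0 x‖ ^ 2) = (⟪D 0 0 x, x⟫_ℂ).re + 1 := by
        have h2S : (2 * ∑ k ∈ Finset.range (m' + 1), ‖D (k + 1) 0 x‖ ^ 2) ≠ 0 :=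
          ne_of_gt (by linarith)
        field_simp
      rw [heq] at hkey
      linarith
    have := (Finset.sum_eq_zero_iff_of_nonneg (fun k _ => by positivity)).1 hSm i
      (Finset.mem_range.2 him)
    have hnorm : ‖D (i + 1) 0 x‖ = 0 := by
      nlinarith [norm_nonneg (D (i + 1) 0 x)]
    exact norm_eq_zero.1 hnorm
  have hD00 : D 0 0 = 0 := by
    refine selfadj_eq_zero (D 0 0) (hDherm 0 0) fun x => ?_
    have hge : 0 ≤ (⟪D 0 0 x, x⟫_ℂ).re := by
      have := hDpos (singl 0 x)
      rwa [schurQF_singl (m' + 1) D 0 (by omega) x] at this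
    have hle : (⟪D 0 0 x, x⟫_ℂ).re ≤ 0 := by
      have hsupp : ∀ k, 1 ≤ k → singl 0 x k = 0 := fun k hk => if_neg (by omega)
      have h1 := hS.2.2.2.1 1 (singl 0 x) hsupp
      rw [schurQF_singl (m' + 1) S 0 (by omega) x] at h1
      have h2 : toepQF Q 1 (singl 0 x) = (⟪Q 0 x, x⟫_ℂ).re := by
        rw [toepQF]
        rw [Finset.sum_range_one, Finset.sum_range_one]
        norm_num
        rfl
      rw [h2] at h1
      have h3 : (⟪D 0 0 x, x⟫_ℂ).re = (⟪S 0 0 x, x⟫_ℂ).re - (⟪Q 0 x, x⟫_ℂ).re := by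
        show (⟪(S 0 0 - X 0 0) x, x⟫_ℂ).re = _
        rw [ContinuousLinearMap.sub_apply, inner_sub_left, Complex.sub_re]
        rfl
      linarith
    linarith
  constructor
  · intro i hi
    match i with
    | 0 =>
      have : S 0 0 - X 0 0 = 0 := hD00
      have h1 : S 0 0 = X 0 0 := sub_eq_zero.1 this
      rw [h1]
      show Q 0 = Q ((0 : ℕ) : ℤ)
      norm_num
    | (i' + 1) =>
      have h1 : D (i' + 1) 0 = 0 := hDcol i' (by omega)
      have h2 : S (i' + 1) 0 = X (i' + 1) 0 := sub_eq_zero.1 h1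
      rw [h2]
      show Q ((i' : ℤ) + 1) = Q (((i' + 1 : ℕ) : ℤ))
      norm_num
  · exact hconc2

end
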